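/- Commutativity of parallel composition modulo ACP_drt^τ: for all closed ACP_drt^τ terms t and t' (with a commutative and associative communication function γ), the equation t ∥ t' = t' ∥ t is derivable from the axioms of ACP_drt^τ. -/

import Mathlib

set_option autoImplicit true

/-- Actions extended with the silent action τ and deadlock δ. -/
inductive ATD (A : Type) : Type where
  | act : A → ATD A
  | tau : ATD A
  | delta : ATD A

/-- Terms of ACP_drt^τ with guarded recursion (variables are natural numbers,
a recursive specification is a total function from variables to terms). -/
inductive Tm (A : Type) : Type where
  | und : ATD A → Tm A            -- undelayable action/silent step/deadlock constant
  | alt : Tm A → Tm A → Tm A      -- alternative composition +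
  | seq : Tm A → Tm A → Tm A      -- sequential composition ·
  | delay : Tm A → Tm A           -- one-time-slice delay σ
  | par : Tm A → Tm A → Tm A      -- parallel composition ∥
  | lm : Tm A → Tm A → Tm A       -- left merge ⌊
  | cm : Tm A → Tm A → Tm A       -- communication merge |
  | encap : Set A → Tm A → Tm A   -- encapsulation ∂_H
  | abstr : Set A → Tm A → Tm A   -- abstraction τ_I
  | timeout : Tm A → Tm A         -- current-time-slice time-out ν
  | var : ℕ → Tm A                -- variable
  | recc : (ℕ → Tm A) → ℕ → Tm A   -- recursion constant ⟨X|E⟩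
  | shift : Tm A → Tm A           -- one-time-slice shift ω (auxiliary)
  | tfp : Tm A → Tm A             -- time-free projection π_tf (auxiliary)

namespace Tm
variable {A : Type}

/-- Apply an assignment of terms to variables (leaving recursion constants,
whose variables are bound, untouched). -/
def asg (θ : ℕ → Tm A) : Tm A → Tm A
  | und a => und a
  | alt t u => alt (asg θ t) (asg θ u)
  | seq t u => seq (asg θ t) (asg θ u)
  | delay t => delay (asg θ t)
  | par t u => par (asg θ t) (asg θ u)
  | lm t u => lm (asg θ t) (asg θ u)
  | cm t u => cm (asg θ t) (asg θ u)
  | encap H t => encap H (asg θ t)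
  | abstr I t => abstr I (asg θ t)
  | timeout t => timeout (asg θ t)
  | var X => θ X
  | recc E X => recc E X
  | shift t => shift (asg θ t)
  | tfp t => tfp (asg θ t)

/-- ⟨t|E⟩ : replace each variable Y of t by the recursion constant ⟨Y|E⟩. -/
def sub (E : ℕ → Tm A) (t : Tm A) : Tm A := asg (fun Y => recc E Y) t

/-- n-fold one-time-slice delay σⁿ. -/
def delayN : ℕ → Tm A → Tm A
  | 0, t => t
  | n+1, t => delay (delayN n t)

/-- n-fold one-time-slice shift ωⁿ. -/
def shiftN : ℕ → Tm A → Tm A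
  | 0, t => t
  | n+1, t => shift (shiftN n t)

/-- Syntactically guarded term: no abstraction operator occurs and each variable
occurrence is within a subterm a·t' (a an observable action) or σ(t'). -/
def Guarded : Tm A → Prop
  | und _ => True
  | alt t u => Guarded t ∧ Guarded u
  | seq t u => Guarded t ∧ (Guarded u ∨ ∃ a : A, t = und (ATD.act a))
  | delay _ => True
  | par t u => Guarded t ∧ Guarded u
  | lm t u => Guarded t ∧ Guarded u
  | cm t u => Guarded t ∧ Guarded u
  | encap _ t => Guarded t
  | abstr _ _ => False
  | timeout t => Guarded t
  | var _ => False
  | recc _ _ => True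
  | shift t => Guarded t
  | tfp _ => False

/-- Guarded recursive specification. -/
def GuardedSpec (E : ℕ → Tm A) : Prop := ∀ Y, Guarded (E Y)

/-- No free variables (variables inside recursion constants are bound). -/
def NoFreeVar : Tm A → Prop
  | und _ => True
  | alt t u => NoFreeVar t ∧ NoFreeVar u
  | seq t u => NoFreeVar t ∧ NoFreeVar u
  | delay t => NoFreeVar t
  | par t u => NoFreeVar t ∧ NoFreeVar u
  | lm t u => NoFreeVar t ∧ NoFreeVar u
  | cm t u => NoFreeVar t ∧ NoFreeVar u
  | encap _ t => NoFreeVar t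
  | abstr _ t => NoFreeVar t
  | timeout t => NoFreeVar t
  | var _ => False
  | recc _ _ => True
  | shift t => NoFreeVar t
  | tfp t => NoFreeVar t

/-- Proper ACP_drt^τ+REC term body: the auxiliary operators ω and π_tf do not
occur and all recursive specifications occurring in it are guarded. -/
def PT : Tm A → Prop
  | und _ => True
  | alt t u => PT t ∧ PT u
  | seq t u => PT t ∧ PT u
  | delay t => PT t
  | par t u => PT t ∧ PT u
  | lm t u => PT t ∧ PT u
  | cm t u => PT t ∧ PT u
  | encap _ t => PT t
  | abstr _ t => PT t
  | timeout t => PT t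
  | var _ => True
  | recc E _ => ∀ Y, Guarded (E Y) ∧ PT (E Y)
  | shift _ => False
  | tfp _ => False

/-- Element of 𝒫: closed ACP_drt^τ+REC term. -/
def PTm (t : Tm A) : Prop := PT t ∧ NoFreeVar t

/-- Closed ACP_drt^τ term (recursion-free, no variables, no auxiliary operators). -/
def Plain : Tm A → Prop
  | und _ => True
  | alt t u => Plain t ∧ Plain u
  | seq t u => Plain t ∧ Plain u
  | delay t => Plain t
  | par t u => Plain t ∧ Plain u
  | lm t u => Plain t ∧ Plain u
  | cm t u => Plain t ∧ Plain u
  | encap _ t => Plain t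
  | abstr _ t => Plain t
  | timeout t => Plain t
  | var _ => False
  | recc _ _ => False
  | shift _ => False
  | tfp _ => False

/-- No recursion constant occurs. -/
def RecFree : Tm A → Prop
  | und _ => True
  | alt t u => RecFree t ∧ RecFree u
  | seq t u => RecFree t ∧ RecFree u
  | delay t => RecFree t
  | par t u => RecFree t ∧ RecFree u
  | lm t u => RecFree t ∧ RecFree u
  | cm t u => RecFree t ∧ RecFree u
  | encap _ t => RecFree t
  | abstr _ t => RecFree t
  | timeout t => RecFree t
  | var _ => True
  | recc _ _ => False
  | shift t => RecFree t
  | tfp t => RecFree t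

/-- No abstraction operator occurs. -/
def AbstrFree : Tm A → Prop
  | und _ => True
  | alt t u => AbstrFree t ∧ AbstrFree u
  | seq t u => AbstrFree t ∧ AbstrFree u
  | delay t => AbstrFree t
  | par t u => AbstrFree t ∧ AbstrFree u
  | lm t u => AbstrFree t ∧ AbstrFree u
  | cm t u => AbstrFree t ∧ AbstrFree u
  | encap _ t => AbstrFree t
  | abstr _ _ => False
  | timeout t => AbstrFree t
  | var _ => True
  | recc E _ => ∀ Y, AbstrFree (E Y)
  | shift t => AbstrFree t
  | tfp t => AbstrFree t

/-- Term of BPA_drt^τ+REC: no ∥, ⌊, |, ∂_H and no auxiliary operators. -/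
def BpaP : Tm A → Prop
  | und _ => True
  | alt t u => BpaP t ∧ BpaP u
  | seq t u => BpaP t ∧ BpaP u
  | delay t => BpaP t
  | par _ _ => False
  | lm _ _ => False
  | cm _ _ => False
  | encap _ _ => False
  | abstr _ t => BpaP t
  | timeout t => BpaP t
  | var _ => True
  | recc E _ => ∀ Y, BpaP (E Y)
  | shift _ => False
  | tfp _ => False

/-- The delayable action a = ⟨X | X = \underline{a} + σ(X)⟩. -/
def dact (a : ATD A) : Tm A := recc (fun _ => alt (und a) (delay (var 0))) 0

end Tm

/-- Finite alternative composition (the empty sum is \underline{δ}). -/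
def altList {A : Type} : List (Tm A) → Tm A
  | [] => .und .delta
  | [t] => t
  | t :: ts => .alt t (altList ts)

/-- Finite parallel composition (the empty composition is \underline{δ}). -/
def parList {A : Type} : List (Tm A) → Tm A
  | [] => .und .delta
  | [t] => t
  | t :: ts => .par t (parList ts)

/-- Basic terms over ACP_drt^τ. -/
inductive Basic {A : Type} : Tm A → Prop where
  | und (a : ATD A) : Basic (.und a)
  | pre (a : ATD A) (h : a ≠ ATD.delta) {t : Tm A} : Basic t → Basic (.seq (.und a) t)
  | delay {t : Tm A} : Basic t → Basic (.delay t)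
  | alt {t u : Tm A} : Basic t → Basic u → Basic (.alt t u)

/-- ts-basic terms over ACP_drt^τ. -/
inductive TsBasic {A : Type} : Tm A → Prop where
  | und (a : ATD A) (n : ℕ) : TsBasic (Tm.delayN n (.und a))
  | pre (a : ATD A) (n : ℕ) (h : a ≠ ATD.delta) {t : Tm A} :
      TsBasic t → TsBasic (.seq (Tm.delayN n (.und a)) t)
  | alt {t u : Tm A} : TsBasic t → TsBasic u → TsBasic (.alt t u)

/-- Linear terms. -/
inductive Linear {A : Type} : Tm A → Prop where
  | und (a : ATD A) : Linear (.und a)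
  | pre (a : ATD A) (h : a ≠ ATD.delta) (X : ℕ) : Linear (.seq (.und a) (.var X))
  | delay (X : ℕ) : Linear (.delay (.var X))
  | alt {t u : Tm A} : Linear t → Linear u → Linear (.alt t u)

/-- Derivability in (conditional) equational logic from the axioms of ACP_drt^τ,
optionally (recOK) with the axioms RDP and RSP for guarded recursion, and
optionally with additional axioms Ax. -/
inductive Deriv {A : Type} (γ : ATD A → ATD A → ATD A) (Ax : Tm A → Tm A → Prop)
    (recOK : Bool) : Tm A → Tm A → Prop where
  | refl (t) : Deriv γ Ax recOK t t
  | symm {t u} : Deriv γ Ax recOK t u → Deriv γ Ax recOK u t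
  | trans {t u v} : Deriv γ Ax recOK t u → Deriv γ Ax recOK u v → Deriv γ Ax recOK t v
  | altCongr {t t' u u'} : Deriv γ Ax recOK t t' → Deriv γ Ax recOK u u' →
      Deriv γ Ax recOK (.alt t u) (.alt t' u')
  | seqCongr {t t' u u'} : Deriv γ Ax recOK t t' → Deriv γ Ax recOK u u' →
      Deriv γ Ax recOK (.seq t u) (.seq t' u')
  | delayCongr {t t'} : Deriv γ Ax recOK t t' → Deriv γ Ax recOK (.delay t) (.delay t')
  | parCongr {t t' u u'} : Deriv γ Ax recOK t t' → Deriv γ Ax recOK u u' →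
      Deriv γ Ax recOK (.par t u) (.par t' u')
  | lmCongr {t t' u u'} : Deriv γ Ax recOK t t' → Deriv γ Ax recOK u u' →
      Deriv γ Ax recOK (.lm t u) (.lm t' u')
  | cmCongr {t t' u u'} : Deriv γ Ax recOK t t' → Deriv γ Ax recOK u u' →
      Deriv γ Ax recOK (.cm t u) (.cm t' u')
  | encapCongr (H) {t t'} : Deriv γ Ax recOK t t' →
      Deriv γ Ax recOK (.encap H t) (.encap H t')
  | abstrCongr (I) {t t'} : Deriv γ Ax recOK t t' →
      Deriv γ Ax recOK (.abstr I t) (.abstr I t')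
  | timeoutCongr {t t'} : Deriv γ Ax recOK t t' →
      Deriv γ Ax recOK (.timeout t) (.timeout t')
  | shiftCongr {t t'} : Deriv γ Ax recOK t t' → Deriv γ Ax recOK (.shift t) (.shift t')
  | tfpCongr {t t'} : Deriv γ Ax recOK t t' → Deriv γ Ax recOK (.tfp t) (.tfp t')
  | extra {t u} : Ax t u → Deriv γ Ax recOK t u
  -- A1–A7DR
  | A1 (x y) : Deriv γ Ax recOK (.alt x y) (.alt y x)
  | A2 (x y z) : Deriv γ Ax recOK (.alt (.alt x y) z) (.alt x (.alt y z))
  | A3 (x) : Deriv γ Ax recOK (.alt x x) x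
  | A4 (x y z) : Deriv γ Ax recOK (.seq (.alt x y) z) (.alt (.seq x z) (.seq y z))
  | A5 (x y z) : Deriv γ Ax recOK (.seq (.seq x y) z) (.seq x (.seq y z))
  | A6DR (x) : Deriv γ Ax recOK (.alt x (.und .delta)) x
  | A7DR (x) : Deriv γ Ax recOK (.seq (.und .delta) x) (.und .delta)
  -- DRT1, DRT2
  | DRT1 (x y) : Deriv γ Ax recOK (.alt (.delay x) (.delay y)) (.delay (.alt x y))
  | DRT2 (x y) : Deriv γ Ax recOK (.seq (.delay x) y) (.delay (.seq x y))
  -- encapsulation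
  | D1DR (a : ATD A) (H : Set A) (h : ∀ b, a = ATD.act b → b ∉ H) :
      Deriv γ Ax recOK (.encap H (.und a)) (.und a)
  | D2DR (b : A) (H : Set A) (h : b ∈ H) :
      Deriv γ Ax recOK (.encap H (.und (.act b))) (.und .delta)
  | D3 (H x y) : Deriv γ Ax recOK (.encap H (.alt x y)) (.alt (.encap H x) (.encap H y))
  | D4 (H x y) : Deriv γ Ax recOK (.encap H (.seq x y)) (.seq (.encap H x) (.encap H y))
  | DRD (H x) : Deriv γ Ax recOK (.encap H (.delay x)) (.delay (.encap H x))
  -- abstraction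
  | TI1DR (a : ATD A) (I : Set A) (h : ∀ b, a = ATD.act b → b ∉ I) :
      Deriv γ Ax recOK (.abstr I (.und a)) (.und a)
  | TI2DR (b : A) (I : Set A) (h : b ∈ I) :
      Deriv γ Ax recOK (.abstr I (.und (.act b))) (.und .tau)
  | TI3 (I x y) : Deriv γ Ax recOK (.abstr I (.alt x y)) (.alt (.abstr I x) (.abstr I y))
  | TI4 (I x y) : Deriv γ Ax recOK (.abstr I (.seq x y)) (.seq (.abstr I x) (.abstr I y))
  | DRTI (I x) : Deriv γ Ax recOK (.abstr I (.delay x)) (.delay (.abstr I x))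
  -- merge
  | CM1 (x y) : Deriv γ Ax recOK (.par x y) (.alt (.alt (.lm x y) (.lm y x)) (.cm x y))
  | CM2DR (a : ATD A) (x) : Deriv γ Ax recOK (.lm (.und a) x) (.seq (.und a) x)
  | CM3DR (a : ATD A) (x y) :
      Deriv γ Ax recOK (.lm (.seq (.und a) x) y) (.seq (.und a) (.par x y))
  | DRCM1 (x y) : Deriv γ Ax recOK (.lm (.delay x) (.timeout y)) (.und .delta)
  | DRCM2 (x y z) : Deriv γ Ax recOK (.lm (.delay x) (.alt (.timeout y) (.delay z)))
      (.delay (.lm x z))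
  | CM4 (x y z) : Deriv γ Ax recOK (.lm (.alt x y) z) (.alt (.lm x z) (.lm y z))
  | CM5DR (a b : ATD A) (x) : Deriv γ Ax recOK (.cm (.seq (.und a) x) (.und b))
      (.seq (.cm (.und a) (.und b)) x)
  | CM6DR (a b : ATD A) (x) : Deriv γ Ax recOK (.cm (.und a) (.seq (.und b) x))
      (.seq (.cm (.und a) (.und b)) x)
  | CM7DR (a b : ATD A) (x y) : Deriv γ Ax recOK (.cm (.seq (.und a) x) (.seq (.und b) y))
      (.seq (.cm (.und a) (.und b)) (.par x y))
  | DRCM3 (x y) : Deriv γ Ax recOK (.cm (.timeout x) (.delay y)) (.und .delta)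
  | DRCM4 (x y) : Deriv γ Ax recOK (.cm (.delay x) (.timeout y)) (.und .delta)
  | DRCM5 (x y) : Deriv γ Ax recOK (.cm (.delay x) (.delay y)) (.delay (.cm x y))
  | CM8 (x y z) : Deriv γ Ax recOK (.cm (.alt x y) z) (.alt (.cm x z) (.cm y z))
  | CM9 (x y z) : Deriv γ Ax recOK (.cm x (.alt y z)) (.alt (.cm x y) (.cm x z))
  | CFDR (a b : ATD A) : Deriv γ Ax recOK (.cm (.und a) (.und b)) (.und (γ a b))
  -- time-out
  | DRTO1 (a : ATD A) : Deriv γ Ax recOK (.timeout (.und a)) (.und a)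
  | DRTO2 (x y) : Deriv γ Ax recOK (.timeout (.alt x y)) (.alt (.timeout x) (.timeout y))
  | DRTO3 (x y) : Deriv γ Ax recOK (.timeout (.seq x y)) (.seq (.timeout x) y)
  | DRTO4 (x) : Deriv γ Ax recOK (.timeout (.delay x)) (.und .delta)
  -- silent step
  | DRB1 (a : ATD A) : Deriv γ Ax recOK (.seq (.und a) (.und .tau)) (.und a)
  | DRB2 (a : ATD A) (x y) : Deriv γ Ax recOK
      (.seq (.und a) (.alt (.seq (.und .tau) (.alt (.timeout x) y)) (.timeout x)))
      (.seq (.und a) (.alt (.timeout x) y))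
  | DRB3 (a : ATD A) (x y) : Deriv γ Ax recOK
      (.seq (.und a) (.alt (.seq (.und .tau) (.alt (.timeout x) y)) y))
      (.seq (.und a) (.alt (.timeout x) y))
  | DRB4 (a : ATD A) (x y) : Deriv γ Ax recOK
      (.seq (.und a) (.alt (.delay (.seq (.und .tau) x)) (.timeout y)))
      (.seq (.und a) (.alt (.delay x) (.timeout y)))
  -- recursion
  | RDP (E : ℕ → Tm A) (X : ℕ) (hrec : recOK = true) (hg : Tm.GuardedSpec E) :
      Deriv γ Ax recOK (.recc E X) (Tm.sub E (E X))
  | RSP (E : ℕ → Tm A) (θ : ℕ → Tm A) (X : ℕ) (hrec : recOK = true)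
      (hg : Tm.GuardedSpec E) (h : ∀ Y, Deriv γ Ax recOK (θ Y) (Tm.asg θ (E Y))) :
      Deriv γ Ax recOK (θ X) (.recc E X)

/-- The empty set of additional axioms. -/
def NoAx {A : Type} : Tm A → Tm A → Prop := fun _ _ => False

/-! ### Two-phase structural operational semantics -/

/-- Map a transition label (A ∪ {τ}, with `none` = τ) into A ∪ {τ,δ}. -/
def toATD {A : Type} : Option A → ATD A
  | some a => ATD.act a
  | none => ATD.tau

/-- Combination of the residues of two synchronously performed actions
(`none` stands for successful termination √). -/
def parOpt {A : Type} : Option (Tm A) → Option (Tm A) → Option (Tm A)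
  | some x, some y => some (.par x y)
  | some x, none => some x
  | none, some y => some y
  | none, none => none

/-- Capability of idling till the next time slice. -/
inductive CanIdle {A : Type} : Tm A → Prop where
  | delay (t : Tm A) : CanIdle (.delay t)
  | altL {t u : Tm A} : CanIdle t → CanIdle (.alt t u)
  | altR {t u : Tm A} : CanIdle u → CanIdle (.alt t u)
  | seq {t : Tm A} (u : Tm A) : CanIdle t → CanIdle (.seq t u)
  | par {t u : Tm A} : CanIdle t → CanIdle u → CanIdle (.par t u)
  | lm {t u : Tm A} : CanIdle t → CanIdle u → CanIdle (.lm t u)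
  | cm {t u : Tm A} : CanIdle t → CanIdle u → CanIdle (.cm t u)
  | encap (H : Set A) {t : Tm A} : CanIdle t → CanIdle (.encap H t)
  | abstr (I : Set A) {t : Tm A} : CanIdle t → CanIdle (.abstr I t)
  | recc {E : ℕ → Tm A} {X : ℕ} : Tm.GuardedSpec E →
      CanIdle (Tm.sub E (E X)) → CanIdle (.recc E X)

/-- σ-transitions of the two-phase semantics (Table 3). -/
inductive SStep {A : Type} : Tm A → Tm A → Prop where
  | delay (t : Tm A) : SStep (.delay t) t
  | altL {t t' u : Tm A} : SStep t t' → ¬ CanIdle u → SStep (.alt t u) t'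
  | altR {t u u' : Tm A} : ¬ CanIdle t → SStep u u' → SStep (.alt t u) u'
  | altB {t t' u u' : Tm A} : SStep t t' → SStep u u' → SStep (.alt t u) (.alt t' u')
  | seq {t t' : Tm A} (u : Tm A) : SStep t t' → SStep (.seq t u) (.seq t' u)
  | par {t t' u u' : Tm A} : SStep t t' → SStep u u' → SStep (.par t u) (.par t' u')
  | lm {t t' u u' : Tm A} : SStep t t' → SStep u u' → SStep (.lm t u) (.lm t' u')
  | cm {t t' u u' : Tm A} : SStep t t' → SStep u u' → SStep (.cm t u) (.cm t' u')
  | encap (H : Set A) {t t' : Tm A} : SStep t t' → SStep (.encap H t) (.encap H t')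
  | abstr (I : Set A) {t t' : Tm A} : SStep t t' → SStep (.abstr I t) (.abstr I t')
  | recc {E : ℕ → Tm A} {X : ℕ} {t' : Tm A} : Tm.GuardedSpec E →
      SStep (Tm.sub E (E X)) t' → SStep (.recc E X) t'

/-- Action transitions of the two-phase semantics (Table 3); the label `none`
is the silent step τ and the target `none` is successful termination √. -/
inductive AStep {A : Type} (γ : ATD A → ATD A → ATD A) :
    Tm A → Option A → Option (Tm A) → Prop where
  | act (a : A) : AStep γ (.und (.act a)) (some a) none
  | tau : AStep γ (.und .tau) none none
  | altL {t u ℓ o} : AStep γ t ℓ o → AStep γ (.alt t u) ℓ o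
  | altR {t u ℓ o} : AStep γ u ℓ o → AStep γ (.alt t u) ℓ o
  | seqStep {t t' u ℓ} : AStep γ t ℓ (some t') → AStep γ (.seq t u) ℓ (some (.seq t' u))
  | seqTerm {t u ℓ} : AStep γ t ℓ none → AStep γ (.seq t u) ℓ (some u)
  | parL {t t' u ℓ} : AStep γ t ℓ (some t') → AStep γ (.par t u) ℓ (some (.par t' u))
  | parR {t u u' ℓ} : AStep γ u ℓ (some u') → AStep γ (.par t u) ℓ (some (.par t u'))
  | parLT {t u ℓ} : AStep γ t ℓ none → AStep γ (.par t u) ℓ (some u)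
  | parRT {t u ℓ} : AStep γ u ℓ none → AStep γ (.par t u) ℓ (some t)
  | parC {t u ℓ₁ ℓ₂ ℓ o₁ o₂} : AStep γ t ℓ₁ o₁ → AStep γ u ℓ₂ o₂ →
      γ (toATD ℓ₁) (toATD ℓ₂) = toATD ℓ → AStep γ (.par t u) ℓ (parOpt o₁ o₂)
  | lmStep {t t' u ℓ} : AStep γ t ℓ (some t') → AStep γ (.lm t u) ℓ (some (.par t' u))
  | lmTerm {t u ℓ} : AStep γ t ℓ none → AStep γ (.lm t u) ℓ (some u)
  | cmC {t u ℓ₁ ℓ₂ ℓ o₁ o₂} : AStep γ t ℓ₁ o₁ → AStep γ u ℓ₂ o₂ →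
      γ (toATD ℓ₁) (toATD ℓ₂) = toATD ℓ → AStep γ (.cm t u) ℓ (parOpt o₁ o₂)
  | encap (H : Set A) {t ℓ o} : AStep γ t ℓ o → (∀ b, ℓ = some b → b ∉ H) →
      AStep γ (.encap H t) ℓ (Option.map (Tm.encap H) o)
  | abstrKeep (I : Set A) {t ℓ o} : AStep γ t ℓ o → (∀ b, ℓ = some b → b ∉ I) →
      AStep γ (.abstr I t) ℓ (Option.map (Tm.abstr I) o)
  | abstrHide (I : Set A) {t b o} : AStep γ t (some b) o → b ∈ I →
      AStep γ (.abstr I t) none (Option.map (Tm.abstr I) o)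
  | timeout {t ℓ o} : AStep γ t ℓ o → AStep γ (.timeout t) ℓ o
  | recc {E X ℓ o} : Tm.GuardedSpec E → AStep γ (Tm.sub E (E X)) ℓ o →
      AStep γ (.recc E X) ℓ o

/-- Labels of the two-phase semantics: A ∪ {τ} ∪ {σ}. -/
inductive L2 (A : Type) where
  | act : A → L2 A
  | tau : L2 A
  | sig : L2 A

/-- Combined transition relation of the two-phase semantics. -/
def Step {A : Type} (γ : ATD A → ATD A → ATD A) (t : Tm A) :
    L2 A → Option (Tm A) → Prop
  | .act a, o => AStep γ t (some a) o
  | .tau, o => AStep γ t none o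
  | .sig, o => ∃ t', o = some t' ∧ SStep t t'

/-- A silent path t₂ = t*₀ →τ t*₁ →τ ⋯ →τ t*ₙ with R(t₁, t*ᵢ₊₁) at every step. -/
inductive TauSeq {A : Type} (γ : ATD A → ATD A → ATD A)
    (R : Option (Tm A) → Option (Tm A) → Prop) (t1 t2 : Tm A) : Tm A → Prop where
  | refl : TauSeq γ R t1 t2 t2
  | step {u v : Tm A} : TauSeq γ R t1 t2 u → AStep γ u none (some v) →
      R (some t1) (some v) → TauSeq γ R t1 t2 v

/-- Branching bisimulation on the two-phase semantics. -/
def IsBB {A : Type} (γ : ATD A → ATD A → ATD A)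
    (R : Option (Tm A) → Option (Tm A) → Prop) : Prop :=
  ∀ t1 t2, R (some t1) (some t2) →
    (∀ ℓ o1, Step γ t1 ℓ o1 →
      (ℓ = L2.tau ∧ R o1 (some t2)) ∨
      ∃ u o2, TauSeq γ R t1 t2 u ∧ Step γ u ℓ o2 ∧ R o1 o2) ∧
    (∀ ℓ o2, Step γ t2 ℓ o2 →
      (ℓ = L2.tau ∧ R (some t1) o2) ∨
      ∃ u o1, TauSeq γ (fun p q => R q p) t2 t1 u ∧ Step γ u ℓ o1 ∧ R o1 o2)

/-- Branching bisimilarity ↔_b on the two-phase semantics. -/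
def BBisim {A : Type} (γ : ATD A → ATD A → ATD A) (t1 t2 : Tm A) : Prop :=
  ∃ R, IsBB γ R ∧ R (some t1) (some t2)

/-- The root condition of a pair in a relation (two-phase semantics). -/
def RootCond {A : Type} (γ : ATD A → ATD A → ATD A)
    (R : Option (Tm A) → Option (Tm A) → Prop) (t1 t2 : Tm A) : Prop :=
  (∀ ℓ o1, Step γ t1 ℓ o1 → ∃ o2, Step γ t2 ℓ o2 ∧ R o1 o2) ∧
  (∀ ℓ o2, Step γ t2 ℓ o2 → ∃ o1, Step γ t1 ℓ o1 ∧ R o1 o2)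

/-- Reachability by idling only. -/
def Midling {A : Type} : Tm A → Tm A → Prop := Relation.ReflTransGen SStep

/-- Rooted branching bisimilarity ↔_rb on the two-phase semantics. -/
def RootedBB {A : Type} (γ : ATD A → ATD A → ATD A) (t1 t2 : Tm A) : Prop :=
  ∃ R, IsBB γ R ∧ R (some t1) (some t2) ∧
    ∀ t1' t2', Midling t1 t1' → Midling t2 t2' → R (some t1') (some t2') →
      RootCond γ R t1' t2'

/-! ### Time-stamped structural operational semantics -/

/-- Idling relation of the time-stamped semantics: t ⇑ n. -/
inductive Idles {A : Type} : Tm A → ℕ → Prop where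
  | zero (t : Tm A) : Idles t 0
  | altL {t u n} : Idles t n → Idles (.alt t u) n
  | altR {t u n} : Idles u n → Idles (.alt t u) n
  | seq {t n} (u : Tm A) : Idles t n → Idles (.seq t u) n
  | delay {t n} : Idles t n → Idles (.delay t) (n+1)
  | par {t u n} : Idles t n → Idles u n → Idles (.par t u) n
  | lm {t u n} : Idles t n → Idles u n → Idles (.lm t u) n
  | cm {t u n} : Idles t n → Idles u n → Idles (.cm t u) n
  | encap (H : Set A) {t n} : Idles t n → Idles (.encap H t) n
  | abstr (I : Set A) {t n} : Idles t n → Idles (.abstr I t) n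
  | recc {E X n} : Tm.GuardedSpec E → Idles (Tm.sub E (E X)) n → Idles (.recc E X) n
  | shift {t n} : Idles t (n+1) → Idles (.shift t) n

/-- Time-stamped transitions t →^{a[n]} t' (Table 6); the label `none` is τ and
the target `none` is successful termination √. -/
inductive TStep {A : Type} (γ : ATD A → ATD A → ATD A) :
    Tm A → Option A → ℕ → Option (Tm A) → Prop where
  | act (a : A) : TStep γ (.und (.act a)) (some a) 0 none
  | tau : TStep γ (.und .tau) none 0 none
  | altL {t u ℓ n o} : TStep γ t ℓ n o → TStep γ (.alt t u) ℓ n o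
  | altR {t u ℓ n o} : TStep γ u ℓ n o → TStep γ (.alt t u) ℓ n o
  | seqStep {t t' u ℓ n} : TStep γ t ℓ n (some t') →
      TStep γ (.seq t u) ℓ n (some (.seq t' u))
  | seqTerm {t u ℓ n} : TStep γ t ℓ n none → TStep γ (.seq t u) ℓ n (some u)
  | delay {t ℓ n o} : TStep γ t ℓ n o → TStep γ (.delay t) ℓ (n+1) o
  | parL {t t' u ℓ n} : TStep γ t ℓ n (some t') → Idles u n →
      TStep γ (.par t u) ℓ n (some (.par t' (Tm.shiftN n u)))
  | parR {t u u' ℓ n} : Idles t n → TStep γ u ℓ n (some u') →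
      TStep γ (.par t u) ℓ n (some (.par (Tm.shiftN n t) u'))
  | parLT {t u ℓ n} : TStep γ t ℓ n none → Idles u n →
      TStep γ (.par t u) ℓ n (some (Tm.shiftN n u))
  | parRT {t u ℓ n} : Idles t n → TStep γ u ℓ n none →
      TStep γ (.par t u) ℓ n (some (Tm.shiftN n t))
  | parC {t u ℓ₁ ℓ₂ ℓ n o₁ o₂} : TStep γ t ℓ₁ n o₁ → TStep γ u ℓ₂ n o₂ →
      γ (toATD ℓ₁) (toATD ℓ₂) = toATD ℓ → TStep γ (.par t u) ℓ n (parOpt o₁ o₂)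
  | lmStep {t t' u ℓ n} : TStep γ t ℓ n (some t') → Idles u n →
      TStep γ (.lm t u) ℓ n (some (.par t' (Tm.shiftN n u)))
  | lmTerm {t u ℓ n} : TStep γ t ℓ n none → Idles u n →
      TStep γ (.lm t u) ℓ n (some (Tm.shiftN n u))
  | cmC {t u ℓ₁ ℓ₂ ℓ n o₁ o₂} : TStep γ t ℓ₁ n o₁ → TStep γ u ℓ₂ n o₂ →
      γ (toATD ℓ₁) (toATD ℓ₂) = toATD ℓ → TStep γ (.cm t u) ℓ n (parOpt o₁ o₂)
  | encap (H : Set A) {t ℓ n o} : TStep γ t ℓ n o → (∀ b, ℓ = some b → b ∉ H) →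
      TStep γ (.encap H t) ℓ n (Option.map (Tm.encap H) o)
  | abstrKeep (I : Set A) {t ℓ n o} : TStep γ t ℓ n o → (∀ b, ℓ = some b → b ∉ I) →
      TStep γ (.abstr I t) ℓ n (Option.map (Tm.abstr I) o)
  | abstrHide (I : Set A) {t b n o} : TStep γ t (some b) n o → b ∈ I →
      TStep γ (.abstr I t) none n (Option.map (Tm.abstr I) o)
  | timeout {t ℓ o} : TStep γ t ℓ 0 o → TStep γ (.timeout t) ℓ 0 o
  | recc {E X ℓ n o} : Tm.GuardedSpec E → TStep γ (Tm.sub E (E X)) ℓ n o →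
      TStep γ (.recc E X) ℓ n o
  | shift {t ℓ n o} : TStep γ t ℓ (n+1) o → TStep γ (.shift t) ℓ n o

/-- A time-stamped silent path from t₂ with accumulated duration, relating the
appropriately shifted t₁ with every intermediate state. -/
inductive TsSeq {A : Type} (γ : ATD A → ATD A → ATD A)
    (R : Option (Tm A) → Option (Tm A) → Prop) (t1 t2 : Tm A) : ℕ → Tm A → Prop where
  | refl : TsSeq γ R t1 t2 0 t2
  | step {k u nk v} : TsSeq γ R t1 t2 k u → TStep γ u none nk (some v) →
      R (some (Tm.shiftN (k+nk) t1)) (some v) → TsSeq γ R t1 t2 (k+nk) v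

/-- ts-branching bisimulation. -/
def IsTsBB {A : Type} (γ : ATD A → ATD A → ATD A)
    (R : Option (Tm A) → Option (Tm A) → Prop) : Prop :=
  ∀ t1 t2, R (some t1) (some t2) →
    (∀ ℓ n o1, TStep γ t1 ℓ n o1 →
      (ℓ = none ∧ R o1 (some (Tm.shiftN n t2))) ∨
      ∃ k u nm o2, TsSeq γ R t1 t2 k u ∧ TStep γ u ℓ nm o2 ∧ k + nm = n ∧ R o1 o2) ∧
    (∀ ℓ n o2, TStep γ t2 ℓ n o2 →
      (ℓ = none ∧ R (some (Tm.shiftN n t1)) o2) ∨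
      ∃ k u nm o1, TsSeq γ (fun p q => R q p) t2 t1 k u ∧ TStep γ u ℓ nm o1 ∧
        k + nm = n ∧ R o1 o2) ∧
    (∀ n, Idles t1 n ↔ Idles t2 n)

/-- The ts-root condition of a pair in a relation. -/
def TsRootCond {A : Type} (γ : ATD A → ATD A → ATD A)
    (R : Option (Tm A) → Option (Tm A) → Prop) (t1 t2 : Tm A) : Prop :=
  (∀ ℓ n o1, TStep γ t1 ℓ n o1 → ∃ o2, TStep γ t2 ℓ n o2 ∧ R o1 o2) ∧
  (∀ ℓ n o2, TStep γ t2 ℓ n o2 → ∃ o1, TStep γ t1 ℓ n o1 ∧ R o1 o2)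

/-- Rooted ts-branching bisimilarity ↔'_rb. -/
def RootedTsBB {A : Type} (γ : ATD A → ATD A → ATD A) (t1 t2 : Tm A) : Prop :=
  ∃ R, IsTsBB γ R ∧ R (some t1) (some t2) ∧ TsRootCond γ R t1 t2

/-- Activeness: the capability of performing an action in the current time
slice, possibly after some silent steps in the current time slice. -/
inductive Active {A : Type} (γ : ATD A → ATD A → ATD A) : Tm A → Prop where
  | obs {t : Tm A} {a : A} {t' : Tm A} : TStep γ t (some a) 0 (some t') → Active γ t
  | term {t : Tm A} {ℓ : Option A} : TStep γ t ℓ 0 none → Active γ t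
  | tauStep {t t' : Tm A} : TStep γ t none 0 (some t') → Active γ t' → Active γ t

/-- Activeness extended to 𝒫 ∪ {√} (√ is not active). -/
def ActiveO {A : Type} (γ : ATD A → ATD A → ATD A) : Option (Tm A) → Prop
  | some t => Active γ t
  | none => False

/-- A time-stamped silent path for dormancy-aware branching bisimulations:
relatedness of an intermediate state is only required when it is active. -/
inductive DaSeq {A : Type} (γ : ATD A → ATD A → ATD A)
    (R : Option (Tm A) → Option (Tm A) → Prop) (t1 t2 : Tm A) : ℕ → Tm A → Prop where
  | refl : DaSeq γ R t1 t2 0 t2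
  | step {k u nk v} : DaSeq γ R t1 t2 k u → TStep γ u none nk (some v) →
      (Active γ v → R (some (Tm.shiftN (k+nk) t1)) (some v)) → DaSeq γ R t1 t2 (k+nk) v

/-- Dormancy-aware branching bisimulation. -/
def IsDaBB {A : Type} (γ : ATD A → ATD A → ATD A)
    (R : Option (Tm A) → Option (Tm A) → Prop) : Prop :=
  ∀ t1 t2, R (some t1) (some t2) →
    (∀ ℓ n o1, TStep γ t1 ℓ n o1 →
      (ℓ = none ∧ (ActiveO γ o1 → R o1 (some (Tm.shiftN n t2)))) ∨
      ∃ k u nm o2, DaSeq γ R t1 t2 k u ∧ TStep γ u ℓ nm o2 ∧ k + nm = n ∧ R o1 o2) ∧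
    (∀ ℓ n o2, TStep γ t2 ℓ n o2 →
      (ℓ = none ∧ (ActiveO γ o2 → R (some (Tm.shiftN n t1)) o2)) ∨
      ∃ k u nm o1, DaSeq γ (fun p q => R q p) t2 t1 k u ∧ TStep γ u ℓ nm o1 ∧
        k + nm = n ∧ R o1 o2) ∧
    (∀ n, Idles t1 n ↔ Idles t2 n)

/-- Rooted dormancy-aware branching bisimilarity ⇄_rb. -/
def RootedDaBB {A : Type} (γ : ATD A → ATD A → ATD A) (t1 t2 : Tm A) : Prop :=
  ∃ R, IsDaBB γ R ∧ R (some t1) (some t2) ∧ TsRootCond γ R t1 t2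

/-- n-fold σ-step sequences in the two-phase semantics. -/
def SSeq {A : Type} : ℕ → Tm A → Tm A → Prop
  | 0, t, t' => t' = t
  | n+1, t, t' => ∃ u, SStep t u ∧ SSeq n u t'

/-- The axioms of standard concurrency together with the handshaking axiom. -/
inductive SCAx {A : Type} : Tm A → Tm A → Prop where
  | parComm (x y : Tm A) : SCAx (.par x y) (.par y x)
  | parAssoc (x y z : Tm A) : SCAx (.par (.par x y) z) (.par x (.par y z))
  | lmAssoc (x y z : Tm A) : SCAx (.lm (.lm x y) z) (.lm x (.par y z))
  | cmComm (x y : Tm A) : SCAx (.cm x y) (.cm y x)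
  | cmAssoc (x y z : Tm A) : SCAx (.cm (.cm x y) z) (.cm x (.cm y z))
  | cmLm (x y z : Tm A) : SCAx (.cm x (.lm y z)) (.lm (.cm x y) z)
  | handshaking (x y z : Tm A) : SCAx (.timeout (.cm (.cm x y) z)) (.und .delta)

/-- The defining axioms of the time-free projection operator π_tf. -/
inductive TFPAx {A : Type} : Tm A → Tm A → Prop where
  | DRTFP1 (a : ATD A) : TFPAx (.tfp (.und a)) (Tm.dact a)
  | DRTFP2 (x y : Tm A) : TFPAx (.tfp (.alt x y)) (.alt (.tfp x) (.tfp y))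
  | DRTFP3 (x y : Tm A) : TFPAx (.tfp (.seq x y)) (.seq (.tfp x) (.tfp y))
  | DRTFP4 (x : Tm A) : TFPAx (.tfp (.delay x)) (.tfp x)

/-! ### The untimed theory ACP^τ+REC -/

/-- Terms of untimed ACP^τ with guarded recursion. -/
inductive UTm (A : Type) : Type where
  | c : ATD A → UTm A
  | alt : UTm A → UTm A → UTm A
  | seq : UTm A → UTm A → UTm A
  | par : UTm A → UTm A → UTm A
  | lm : UTm A → UTm A → UTm A
  | cm : UTm A → UTm A → UTm A
  | encap : Set A → UTm A → UTm A
  | abstr : Set A → UTm A → UTm A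
  | var : ℕ → UTm A
  | recc : (ℕ → UTm A) → ℕ → UTm A

namespace UTm
variable {A : Type}

def asg (θ : ℕ → UTm A) : UTm A → UTm A
  | c a => c a
  | alt t u => alt (asg θ t) (asg θ u)
  | seq t u => seq (asg θ t) (asg θ u)
  | par t u => par (asg θ t) (asg θ u)
  | lm t u => lm (asg θ t) (asg θ u)
  | cm t u => cm (asg θ t) (asg θ u)
  | encap H t => encap H (asg θ t)
  | abstr I t => abstr I (asg θ t)
  | var X => θ X
  | recc E X => recc E X

def sub (E : ℕ → UTm A) (t : UTm A) : UTm A := asg (fun Y => recc E Y) t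

def Guarded : UTm A → Prop
  | c _ => True
  | alt t u => Guarded t ∧ Guarded u
  | seq t u => Guarded t ∧ (Guarded u ∨ ∃ a : A, t = c (ATD.act a))
  | par t u => Guarded t ∧ Guarded u
  | lm t u => Guarded t ∧ Guarded u
  | cm t u => Guarded t ∧ Guarded u
  | encap _ t => Guarded t
  | abstr _ _ => False
  | var _ => False
  | recc _ _ => True

def GuardedSpec (E : ℕ → UTm A) : Prop := ∀ Y, Guarded (E Y)

/-- Closed untimed term. -/
def Closed : UTm A → Prop
  | c _ => True
  | alt t u => Closed t ∧ Closed u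
  | seq t u => Closed t ∧ Closed u
  | par t u => Closed t ∧ Closed u
  | lm t u => Closed t ∧ Closed u
  | cm t u => Closed t ∧ Closed u
  | encap _ t => Closed t
  | abstr _ t => Closed t
  | var _ => False
  | recc _ _ => True

end UTm

/-- Derivability from the axioms of untimed ACP^τ+REC (with the branching
silent-step axioms B1 and B2 and with RDP and RSP). -/
inductive UDeriv {A : Type} (γ : ATD A → ATD A → ATD A) : UTm A → UTm A → Prop where
  | refl (t) : UDeriv γ t t
  | symm {t u} : UDeriv γ t u → UDeriv γ u t
  | trans {t u v} : UDeriv γ t u → UDeriv γ u v → UDeriv γ t v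
  | altCongr {t t' u u'} : UDeriv γ t t' → UDeriv γ u u' → UDeriv γ (.alt t u) (.alt t' u')
  | seqCongr {t t' u u'} : UDeriv γ t t' → UDeriv γ u u' → UDeriv γ (.seq t u) (.seq t' u')
  | parCongr {t t' u u'} : UDeriv γ t t' → UDeriv γ u u' → UDeriv γ (.par t u) (.par t' u')
  | lmCongr {t t' u u'} : UDeriv γ t t' → UDeriv γ u u' → UDeriv γ (.lm t u) (.lm t' u')
  | cmCongr {t t' u u'} : UDeriv γ t t' → UDeriv γ u u' → UDeriv γ (.cm t u) (.cm t' u')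
  | encapCongr (H) {t t'} : UDeriv γ t t' → UDeriv γ (.encap H t) (.encap H t')
  | abstrCongr (I) {t t'} : UDeriv γ t t' → UDeriv γ (.abstr I t) (.abstr I t')
  | A1 (x y) : UDeriv γ (.alt x y) (.alt y x)
  | A2 (x y z) : UDeriv γ (.alt (.alt x y) z) (.alt x (.alt y z))
  | A3 (x) : UDeriv γ (.alt x x) x
  | A4 (x y z) : UDeriv γ (.seq (.alt x y) z) (.alt (.seq x z) (.seq y z))
  | A5 (x y z) : UDeriv γ (.seq (.seq x y) z) (.seq x (.seq y z))
  | A6 (x) : UDeriv γ (.alt x (.c .delta)) x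
  | A7 (x) : UDeriv γ (.seq (.c .delta) x) (.c .delta)
  | D1 (a : ATD A) (H : Set A) (h : ∀ b, a = ATD.act b → b ∉ H) :
      UDeriv γ (.encap H (.c a)) (.c a)
  | D2 (b : A) (H : Set A) (h : b ∈ H) : UDeriv γ (.encap H (.c (.act b))) (.c .delta)
  | D3 (H x y) : UDeriv γ (.encap H (.alt x y)) (.alt (.encap H x) (.encap H y))
  | D4 (H x y) : UDeriv γ (.encap H (.seq x y)) (.seq (.encap H x) (.encap H y))
  | TI1 (a : ATD A) (I : Set A) (h : ∀ b, a = ATD.act b → b ∉ I) :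
      UDeriv γ (.abstr I (.c a)) (.c a)
  | TI2 (b : A) (I : Set A) (h : b ∈ I) : UDeriv γ (.abstr I (.c (.act b))) (.c .tau)
  | TI3 (I x y) : UDeriv γ (.abstr I (.alt x y)) (.alt (.abstr I x) (.abstr I y))
  | TI4 (I x y) : UDeriv γ (.abstr I (.seq x y)) (.seq (.abstr I x) (.abstr I y))
  | CM1 (x y) : UDeriv γ (.par x y) (.alt (.alt (.lm x y) (.lm y x)) (.cm x y))
  | CM2 (a : ATD A) (x) : UDeriv γ (.lm (.c a) x) (.seq (.c a) x)
  | CM3 (a : ATD A) (x y) : UDeriv γ (.lm (.seq (.c a) x) y) (.seq (.c a) (.par x y))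
  | CM4 (x y z) : UDeriv γ (.lm (.alt x y) z) (.alt (.lm x z) (.lm y z))
  | CM5 (a b : ATD A) (x) : UDeriv γ (.cm (.seq (.c a) x) (.c b)) (.seq (.cm (.c a) (.c b)) x)
  | CM6 (a b : ATD A) (x) : UDeriv γ (.cm (.c a) (.seq (.c b) x)) (.seq (.cm (.c a) (.c b)) x)
  | CM7 (a b : ATD A) (x y) :
      UDeriv γ (.cm (.seq (.c a) x) (.seq (.c b) y)) (.seq (.cm (.c a) (.c b)) (.par x y))
  | CM8 (x y z) : UDeriv γ (.cm (.alt x y) z) (.alt (.cm x z) (.cm y z))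
  | CM9 (x y z) : UDeriv γ (.cm x (.alt y z)) (.alt (.cm x y) (.cm x z))
  | CF (a b : ATD A) : UDeriv γ (.cm (.c a) (.c b)) (.c (γ a b))
  | B1 (x) : UDeriv γ (.seq x (.c .tau)) x
  | B2 (x y z) : UDeriv γ (.seq x (.alt (.seq (.c .tau) (.alt y z)) z)) (.seq x (.alt y z))
  | RDP (E : ℕ → UTm A) (X : ℕ) (hg : UTm.GuardedSpec E) :
      UDeriv γ (.recc E X) (UTm.sub E (E X))
  | RSP (E : ℕ → UTm A) (θ : ℕ → UTm A) (X : ℕ) (hg : UTm.GuardedSpec E)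
      (h : ∀ Y, UDeriv γ (θ Y) (UTm.asg θ (E Y))) : UDeriv γ (θ X) (.recc E X)

/-- The embedding ε of untimed ACP^τ+REC terms into ACP_drt^τ+REC, replacing
each action constant a by the delayable action ⟨X | X = \underline{a} + σ(X)⟩. -/
def eps {A : Type} : UTm A → Tm A
  | .c a => Tm.dact a
  | .alt t u => .alt (eps t) (eps u)
  | .seq t u => .seq (eps t) (eps u)
  | .par t u => .par (eps t) (eps u)
  | .lm t u => .lm (eps t) (eps u)
  | .cm t u => .cm (eps t) (eps u)
  | .encap H t => .encap H (eps t)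
  | .abstr I t => .abstr I (eps t)
  | .var X => .var X
  | .recc E X => .recc (fun Y => eps (E Y)) X

namespace ParCommAux
open Tm

variable {A : Type}

/-- Size of a term. -/
def sz : Tm A → ℕ
  | .und _ => 1
  | .alt t u => sz t + sz u + 1
  | .seq t u => sz t + sz u + 1
  | .delay t => sz t + 1
  | .par t u => sz t + sz u + 1
  | .lm t u => sz t + sz u + 1
  | .cm t u => sz t + sz u + 1
  | .encap _ t => sz t + 1
  | .abstr _ t => sz t + 1
  | .timeout t => sz t + 1
  | .var _ => 1
  | .recc _ _ => 1
  | .shift t => sz t + 1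
  | .tfp t => sz t + 1

variable (γ : ATD A → ATD A → ATD A)

/-- δ + x = x. -/
lemma zero_add' (x : Tm A) : Deriv γ NoAx false (.alt (.und .delta) x) x :=
  (Deriv.A1 _ _).trans (Deriv.A6DR x)

/-- (a+b)+(c+d) = (a+c)+(b+d). -/
lemma swap4 (a b c d : Tm A) :
    Deriv γ NoAx false (.alt (.alt a b) (.alt c d)) (.alt (.alt a c) (.alt b d)) := by
  refine (Deriv.A2 _ _ _).trans (Deriv.trans ?_ (Deriv.A2 a c (.alt b d)).symm)
  refine Deriv.altCongr (.refl _) ?_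
  exact ((Deriv.A2 b c d).symm.trans (Deriv.altCongr (Deriv.A1 b c) (.refl _))).trans
    (Deriv.A2 c b d)

lemma seqBasic : ∀ {s : Tm A}, Basic s → ∀ {t : Tm A}, Basic t →
    ∃ u, Basic u ∧ Deriv γ NoAx false (.seq s t) u := by
  intro s hs
  induction hs with
  | und a =>
    intro t ht
    cases a with
    | delta => exact ⟨_, Basic.und .delta, Deriv.A7DR t⟩
    | act b => exact ⟨_, Basic.pre (.act b) (fun h => by cases h) ht, .refl _⟩
    | tau => exact ⟨_, Basic.pre .tau (fun h => by cases h) ht, .refl _⟩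
  | pre a hne hb ih =>
    intro t ht
    obtain ⟨u, hu, hd⟩ := ih ht
    exact ⟨.seq (.und a) u, Basic.pre a hne hu,
      (Deriv.A5 _ _ _).trans (Deriv.seqCongr (.refl _) hd)⟩
  | delay hb ih =>
    intro t ht
    obtain ⟨u, hu, hd⟩ := ih ht
    exact ⟨.delay u, .delay hu, (Deriv.DRT2 _ _).trans (Deriv.delayCongr hd)⟩
  | alt hb1 hb2 ih1 ih2 =>
    intro t ht
    obtain ⟨u1, h1, d1⟩ := ih1 ht
    obtain ⟨u2, h2, d2⟩ := ih2 ht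
    exact ⟨.alt u1 u2, .alt h1 h2, (Deriv.A4 _ _ _).trans (Deriv.altCongr d1 d2)⟩

lemma timeoutBasic : ∀ {s : Tm A}, Basic s →
    ∃ u, Basic u ∧ Deriv γ NoAx false (.timeout s) u := by
  intro s hs
  induction hs with
  | und a => exact ⟨_, Basic.und a, Deriv.DRTO1 a⟩
  | pre a hne hb _ =>
    exact ⟨_, Basic.pre a hne hb,
      (Deriv.DRTO3 _ _).trans (Deriv.seqCongr (Deriv.DRTO1 a) (.refl _))⟩
  | delay _ _ => exact ⟨_, Basic.und .delta, Deriv.DRTO4 _⟩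
  | alt h1 h2 ih1 ih2 =>
    obtain ⟨u1, hu1, d1⟩ := ih1
    obtain ⟨u2, hu2, d2⟩ := ih2
    exact ⟨.alt u1 u2, .alt hu1 hu2, (Deriv.DRTO2 _ _).trans (Deriv.altCongr d1 d2)⟩

/-- Decomposition of a basic term into its now part and delay part. -/
lemma nowLater : ∀ {t : Tm A}, Basic t →
    Deriv γ NoAx false (.timeout t) t ∨
    ∃ v, Basic v ∧ sz v < sz t ∧
      Deriv γ NoAx false t (.alt (.timeout t) (.delay v)) := by
  intro t ht
  induction ht with
  | und a => exact Or.inl (Deriv.DRTO1 a)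
  | pre a hne hb _ =>
    exact Or.inl ((Deriv.DRTO3 _ _).trans (Deriv.seqCongr (Deriv.DRTO1 a) (.refl _)))
  | @delay w hw _ =>
    refine Or.inr ⟨w, hw, by simp [sz], ?_⟩
    exact ((Deriv.altCongr (Deriv.DRTO4 w) (.refl _)).trans
      (zero_add' γ (.delay w))).symm
  | @alt t1 t2 h1 h2 ih1 ih2 =>
    rcases ih1 with d1 | ⟨v1, hv1, hlt1, d1⟩
    · rcases ih2 with d2 | ⟨v2, hv2, hlt2, d2⟩
      · exact Or.inl ((Deriv.DRTO2 _ _).trans (Deriv.altCongr d1 d2))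
      · refine Or.inr ⟨v2, hv2, by simp [sz]; omega, ?_⟩
        refine ((Deriv.altCongr (.refl t1) d2).trans ((Deriv.A2 _ _ _).symm.trans ?_))
        exact Deriv.altCongr
          ((Deriv.altCongr d1.symm (.refl _)).trans (Deriv.DRTO2 t1 t2).symm) (.refl _)
      -- note: careful with shapes; fixed below if needed
    · rcases ih2 with d2 | ⟨v2, hv2, hlt2, d2⟩
      · refine Or.inr ⟨v1, hv1, by simp [sz]; omega, ?_⟩
        refine (Deriv.A1 t1 t2).trans ?_
        refine (Deriv.altCongr (.refl t2) d1).trans ?_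
        refine (Deriv.A2 _ _ _).symm.trans ?_
        refine Deriv.altCongr ?_ (.refl _)
        refine (Deriv.A1 t2 _).trans ?_
        exact (Deriv.altCongr (.refl _) d2.symm).trans (Deriv.DRTO2 t1 t2).symm
      · refine Or.inr ⟨.alt v1 v2, .alt hv1 hv2, by simp [sz]; omega, ?_⟩
        refine (Deriv.altCongr d1 d2).trans ?_
        refine (swap4 γ _ _ _ _).trans ?_
        exact Deriv.altCongr (Deriv.DRTO2 t1 t2).symm (Deriv.DRT1 v1 v2)

end ParCommAux
namespace ParCommAux
open Tm

variable {A : Type} (γ : ATD A → ATD A → ATD A)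

/-- ν(a·x) = a·x. -/
lemma nu_pre (a : ATD A) (x : Tm A) :
    Deriv γ NoAx false (.timeout (.seq (.und a) x)) (.seq (.und a) x) :=
  (Deriv.DRTO3 _ _).trans (Deriv.seqCongr (Deriv.DRTO1 a) (.refl _))

lemma main (hγcomm : ∀ a b, γ a b = γ b a) :
    ∀ n : ℕ, ∀ s t : Tm A, sz s + sz t ≤ n → Basic s → Basic t →
      (∃ u, Basic u ∧ Deriv γ NoAx false (.lm s t) u) ∧
      (∃ u, Basic u ∧ Deriv γ NoAx false (.cm s t) u) ∧
      Deriv γ NoAx false (.cm s t) (.cm t s) ∧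
      (∃ u, Basic u ∧ Deriv γ NoAx false (.par s t) u) ∧
      Deriv γ NoAx false (.par s t) (.par t s) := by
  intro n
  induction n using Nat.strong_induction_on with
  | _ n IH =>
  have IHfull : ∀ s' t' : Tm A, sz s' + sz t' < n → Basic s' → Basic t' →
      (∃ u, Basic u ∧ Deriv γ NoAx false (.lm s' t') u) ∧
      (∃ u, Basic u ∧ Deriv γ NoAx false (.cm s' t') u) ∧
      Deriv γ NoAx false (.cm s' t') (.cm t' s') ∧
      (∃ u, Basic u ∧ Deriv γ NoAx false (.par s' t') u) ∧
      Deriv γ NoAx false (.par s' t') (.par t' s') :=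
    fun s' t' h => IH (sz s' + sz t') h s' t' le_rfl
  -- left merge
  have hlmgen : ∀ s' t' : Tm A, sz s' + sz t' ≤ n → Basic s' → Basic t' →
      ∃ u, Basic u ∧ Deriv γ NoAx false (.lm s' t') u := by
    intro s' t' h hs' ht'
    cases hs' with
    | und a =>
      obtain ⟨u, hu, hd⟩ := seqBasic γ (Basic.und a) ht'
      exact ⟨u, hu, (Deriv.CM2DR a t').trans hd⟩
    | @pre a ha x hx =>
      have hm : sz x + sz t' < n := by simp [sz] at h; omega
      obtain ⟨w, hw, hdw⟩ := (IHfull x t' hm hx ht').2.2.2.1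
      exact ⟨.seq (.und a) w, Basic.pre a ha hw,
        (Deriv.CM3DR a x t').trans (Deriv.seqCongr (.refl _) hdw)⟩
    | @delay x hx =>
      rcases nowLater γ ht' with hnow | ⟨v, hv, hvlt, hdv⟩
      · exact ⟨.und .delta, .und _,
          (Deriv.lmCongr (.refl _) hnow.symm).trans (Deriv.DRCM1 x t')⟩
      · have hm : sz x + sz v < n := by simp [sz] at h; omega
        obtain ⟨w, hw, hdw⟩ := (IHfull x v hm hx hv).1
        exact ⟨.delay w, .delay hw,
          ((Deriv.lmCongr (.refl _) hdv).trans (Deriv.DRCM2 x t' v)).trans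
            (Deriv.delayCongr hdw)⟩
    | @alt s1 s2 h1 h2 =>
      have hm1 : sz s1 + sz t' < n := by simp [sz] at h; omega
      have hm2 : sz s2 + sz t' < n := by simp [sz] at h; omega
      obtain ⟨u1, hu1, d1⟩ := (IHfull s1 t' hm1 h1 ht').1
      obtain ⟨u2, hu2, d2⟩ := (IHfull s2 t' hm2 h2 ht').1
      exact ⟨.alt u1 u2, .alt hu1 hu2, (Deriv.CM4 _ _ _).trans (Deriv.altCongr d1 d2)⟩
  -- communication merge: existence and commutativity
  have hcmgen : ∀ s' t' : Tm A, sz s' + sz t' ≤ n → Basic s' → Basic t' →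
      (∃ u, Basic u ∧ Deriv γ NoAx false (.cm s' t') u) ∧
      Deriv γ NoAx false (.cm s' t') (.cm t' s') := by
    intro s' t' h hs' ht'
    cases hs' with
    | @alt s1 s2 h1 h2 =>
      have hm1 : sz s1 + sz t' < n := by simp [sz] at h; omega
      have hm2 : sz s2 + sz t' < n := by simp [sz] at h; omega
      obtain ⟨u1, hu1, d1⟩ := (IHfull s1 t' hm1 h1 ht').2.1
      obtain ⟨u2, hu2, d2⟩ := (IHfull s2 t' hm2 h2 ht').2.1
      have c1 := (IHfull s1 t' hm1 h1 ht').2.2.1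
      have c2 := (IHfull s2 t' hm2 h2 ht').2.2.1
      refine ⟨⟨.alt u1 u2, .alt hu1 hu2,
        (Deriv.CM8 _ _ _).trans (Deriv.altCongr d1 d2)⟩, ?_⟩
      exact ((Deriv.CM8 _ _ _).trans (Deriv.altCongr c1 c2)).trans
        (Deriv.CM9 t' s1 s2).symm
    | und a =>
      cases ht' with
      | @alt t1 t2 h1 h2 =>
        have hm1 : sz (Tm.und a (A := A)) + sz t1 < n := by simp [sz] at h ⊢; omega
        have hm2 : sz (Tm.und a (A := A)) + sz t2 < n := by simp [sz] at h ⊢; omega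
        obtain ⟨u1, hu1, d1⟩ := (IHfull _ t1 hm1 (Basic.und a) h1).2.1
        obtain ⟨u2, hu2, d2⟩ := (IHfull _ t2 hm2 (Basic.und a) h2).2.1
        have c1 := (IHfull _ t1 hm1 (Basic.und a) h1).2.2.1
        have c2 := (IHfull _ t2 hm2 (Basic.und a) h2).2.2.1
        refine ⟨⟨.alt u1 u2, .alt hu1 hu2,
          (Deriv.CM9 _ _ _).trans (Deriv.altCongr d1 d2)⟩, ?_⟩
        exact ((Deriv.CM9 _ _ _).trans (Deriv.altCongr c1 c2)).trans
          (Deriv.CM8 t1 t2 _).symm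
      | und b =>
        refine ⟨⟨.und (γ a b), .und _, Deriv.CFDR a b⟩, ?_⟩
        exact (Deriv.CFDR a b).trans (by rw [hγcomm a b]; exact (Deriv.CFDR b a).symm)
      | @pre b hb y hy =>
        have eq1 : Deriv γ NoAx false (.cm (.und a) (.seq (.und b) y))
            (.seq (.und (γ a b)) y) :=
          (Deriv.CM6DR a b y).trans (Deriv.seqCongr (Deriv.CFDR a b) (.refl _))
        have eq2 : Deriv γ NoAx false (.cm (.seq (.und b) y) (.und a))
            (.seq (.und (γ a b)) y) := by
          rw [hγcomm a b]
          exact (Deriv.CM5DR b a y).trans (Deriv.seqCongr (Deriv.CFDR b a) (.refl _))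
        refine ⟨?_, eq1.trans eq2.symm⟩
        by_cases hδ : γ a b = ATD.delta
        · rw [hδ] at eq1
          exact ⟨.und .delta, .und _, eq1.trans (Deriv.A7DR y)⟩
        · exact ⟨_, Basic.pre _ hδ hy, eq1⟩
      | @delay y hy =>
        have eq1 : Deriv γ NoAx false (.cm (.und a) (.delay y)) (.und .delta) :=
          (Deriv.cmCongr (Deriv.DRTO1 a).symm (.refl _)).trans (Deriv.DRCM3 (.und a) y)
        have eq2 : Deriv γ NoAx false (.cm (.delay y) (.und a)) (.und .delta) :=
          (Deriv.cmCongr (.refl _) (Deriv.DRTO1 a).symm).trans (Deriv.DRCM4 y (.und a))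
        exact ⟨⟨.und .delta, .und _, eq1⟩, eq1.trans eq2.symm⟩
    | @pre a ha x hx =>
      cases ht' with
      | @alt t1 t2 h1 h2 =>
        have hm1 : sz (Tm.seq (.und a) x) + sz t1 < n := by simp [sz] at h ⊢; omega
        have hm2 : sz (Tm.seq (.und a) x) + sz t2 < n := by simp [sz] at h ⊢; omega
        obtain ⟨u1, hu1, d1⟩ := (IHfull _ t1 hm1 (Basic.pre a ha hx) h1).2.1
        obtain ⟨u2, hu2, d2⟩ := (IHfull _ t2 hm2 (Basic.pre a ha hx) h2).2.1
        have c1 := (IHfull _ t1 hm1 (Basic.pre a ha hx) h1).2.2.1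
        have c2 := (IHfull _ t2 hm2 (Basic.pre a ha hx) h2).2.2.1
        refine ⟨⟨.alt u1 u2, .alt hu1 hu2,
          (Deriv.CM9 _ _ _).trans (Deriv.altCongr d1 d2)⟩, ?_⟩
        exact ((Deriv.CM9 _ _ _).trans (Deriv.altCongr c1 c2)).trans
          (Deriv.CM8 t1 t2 _).symm
      | und b =>
        have eq1 : Deriv γ NoAx false (.cm (.seq (.und a) x) (.und b))
            (.seq (.und (γ a b)) x) :=
          (Deriv.CM5DR a b x).trans (Deriv.seqCongr (Deriv.CFDR a b) (.refl _))
        have eq2 : Deriv γ NoAx false (.cm (.und b) (.seq (.und a) x))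
            (.seq (.und (γ a b)) x) := by
          rw [hγcomm a b]
          exact (Deriv.CM6DR b a x).trans (Deriv.seqCongr (Deriv.CFDR b a) (.refl _))
        refine ⟨?_, eq1.trans eq2.symm⟩
        by_cases hδ : γ a b = ATD.delta
        · rw [hδ] at eq1
          exact ⟨.und .delta, .und _, eq1.trans (Deriv.A7DR x)⟩
        · exact ⟨_, Basic.pre _ hδ hx, eq1⟩
      | @pre b hb y hy =>
        have hm : sz x + sz y < n := by simp [sz] at h; omega
        obtain ⟨w, hw, hdw⟩ := (IHfull x y hm hx hy).2.2.2.1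
        have pcomm := (IHfull x y hm hx hy).2.2.2.2
        have eq1 : Deriv γ NoAx false (.cm (.seq (.und a) x) (.seq (.und b) y))
            (.seq (.und (γ a b)) (.par x y)) :=
          (Deriv.CM7DR a b x y).trans (Deriv.seqCongr (Deriv.CFDR a b) (.refl _))
        have eq2 : Deriv γ NoAx false (.cm (.seq (.und b) y) (.seq (.und a) x))
            (.seq (.und (γ a b)) (.par x y)) := by
          rw [hγcomm a b]
          exact ((Deriv.CM7DR b a y x).trans
            (Deriv.seqCongr (Deriv.CFDR b a) (.refl _))).trans
            (Deriv.seqCongr (.refl _) pcomm.symm)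
        refine ⟨?_, eq1.trans eq2.symm⟩
        by_cases hδ : γ a b = ATD.delta
        · rw [hδ] at eq1
          exact ⟨.und .delta, .und _, eq1.trans (Deriv.A7DR _)⟩
        · exact ⟨.seq (.und (γ a b)) w, Basic.pre _ hδ hw,
            eq1.trans (Deriv.seqCongr (.refl _) hdw)⟩
      | @delay y hy =>
        have eq1 : Deriv γ NoAx false (.cm (.seq (.und a) x) (.delay y)) (.und .delta) :=
          (Deriv.cmCongr (nu_pre γ a x).symm (.refl _)).trans (Deriv.DRCM3 _ y)
        have eq2 : Deriv γ NoAx false (.cm (.delay y) (.seq (.und a) x)) (.und .delta) :=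
          (Deriv.cmCongr (.refl _) (nu_pre γ a x).symm).trans (Deriv.DRCM4 y _)
        exact ⟨⟨.und .delta, .und _, eq1⟩, eq1.trans eq2.symm⟩
    | @delay x hx =>
      cases ht' with
      | @alt t1 t2 h1 h2 =>
        have hm1 : sz (Tm.delay x) + sz t1 < n := by simp [sz] at h ⊢; omega
        have hm2 : sz (Tm.delay x) + sz t2 < n := by simp [sz] at h ⊢; omega
        obtain ⟨u1, hu1, d1⟩ := (IHfull _ t1 hm1 (Basic.delay hx) h1).2.1
        obtain ⟨u2, hu2, d2⟩ := (IHfull _ t2 hm2 (Basic.delay hx) h2).2.1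
        have c1 := (IHfull _ t1 hm1 (Basic.delay hx) h1).2.2.1
        have c2 := (IHfull _ t2 hm2 (Basic.delay hx) h2).2.2.1
        refine ⟨⟨.alt u1 u2, .alt hu1 hu2,
          (Deriv.CM9 _ _ _).trans (Deriv.altCongr d1 d2)⟩, ?_⟩
        exact ((Deriv.CM9 _ _ _).trans (Deriv.altCongr c1 c2)).trans
          (Deriv.CM8 t1 t2 _).symm
      | und b =>
        have eq1 : Deriv γ NoAx false (.cm (.delay x) (.und b)) (.und .delta) :=
          (Deriv.cmCongr (.refl _) (Deriv.DRTO1 b).symm).trans (Deriv.DRCM4 x (.und b))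
        have eq2 : Deriv γ NoAx false (.cm (.und b) (.delay x)) (.und .delta) :=
          (Deriv.cmCongr (Deriv.DRTO1 b).symm (.refl _)).trans (Deriv.DRCM3 (.und b) x)
        exact ⟨⟨.und .delta, .und _, eq1⟩, eq1.trans eq2.symm⟩
      | @pre b hb y hy =>
        have eq1 : Deriv γ NoAx false (.cm (.delay x) (.seq (.und b) y)) (.und .delta) :=
          (Deriv.cmCongr (.refl _) (nu_pre γ b y).symm).trans (Deriv.DRCM4 x _)
        have eq2 : Deriv γ NoAx false (.cm (.seq (.und b) y) (.delay x)) (.und .delta) :=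
          (Deriv.cmCongr (nu_pre γ b y).symm (.refl _)).trans (Deriv.DRCM3 _ x)
        exact ⟨⟨.und .delta, .und _, eq1⟩, eq1.trans eq2.symm⟩
      | @delay y hy =>
        have hm : sz x + sz y < n := by simp [sz] at h; omega
        obtain ⟨w, hw, hdw⟩ := (IHfull x y hm hx hy).2.1
        have c := (IHfull x y hm hx hy).2.2.1
        refine ⟨⟨.delay w, .delay hw, (Deriv.DRCM5 x y).trans (Deriv.delayCongr hdw)⟩, ?_⟩
        exact ((Deriv.DRCM5 x y).trans (Deriv.delayCongr c)).trans (Deriv.DRCM5 y x).symm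
  -- parallel composition
  have hpargen : ∀ s' t' : Tm A, sz s' + sz t' ≤ n → Basic s' → Basic t' →
      (∃ u, Basic u ∧ Deriv γ NoAx false (.par s' t') u) ∧
      Deriv γ NoAx false (.par s' t') (.par t' s') := by
    intro s' t' h hs' ht'
    obtain ⟨u1, hu1, d1⟩ := hlmgen s' t' h hs' ht'
    obtain ⟨u2, hu2, d2⟩ := hlmgen t' s' (by omega) ht' hs'
    obtain ⟨⟨u3, hu3, d3⟩, dc⟩ := hcmgen s' t' h hs' ht'
    refine ⟨⟨.alt (.alt u1 u2) u3, .alt (.alt hu1 hu2) hu3,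
      (Deriv.CM1 s' t').trans (Deriv.altCongr (Deriv.altCongr d1 d2) d3)⟩, ?_⟩
    exact ((Deriv.CM1 s' t').trans
      (Deriv.altCongr (Deriv.A1 _ _) dc)).trans (Deriv.CM1 t' s').symm
  intro s t hsz hs ht
  exact ⟨hlmgen s t hsz hs ht, (hcmgen s t hsz hs ht).1, (hcmgen s t hsz hs ht).2,
    (hpargen s t hsz hs ht).1, (hpargen s t hsz hs ht).2⟩

end ParCommAux
namespace ParCommAux
open Tm

variable {A : Type} (γ : ATD A → ATD A → ATD A)

lemma encapBasic (H : Set A) : ∀ {s : Tm A}, Basic s →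
    ∃ u, Basic u ∧ Deriv γ NoAx false (.encap H s) u := by
  intro s hs
  induction hs with
  | und a =>
    cases a with
    | act b =>
      by_cases hb : b ∈ H
      · exact ⟨.und .delta, .und _, Deriv.D2DR b H hb⟩
      · exact ⟨_, Basic.und _, Deriv.D1DR (.act b) H
          (fun b' e => by cases e; exact hb)⟩
    | tau => exact ⟨_, Basic.und _, Deriv.D1DR .tau H (fun b' e => by cases e)⟩
    | delta => exact ⟨_, Basic.und _, Deriv.D1DR .delta H (fun b' e => by cases e)⟩
  | @pre a ha x hx ih =>
    obtain ⟨w, hw, dw⟩ := ih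
    have base : Deriv γ NoAx false (.encap H (.seq (.und a) x)) (.seq (.encap H (.und a)) (.encap H x)) := Deriv.D4 H (.und a) x
    cases a with
    | act b =>
      by_cases hb : b ∈ H
      · exact ⟨.und .delta, .und _,
          (base.trans (Deriv.seqCongr (Deriv.D2DR b H hb) dw)).trans (Deriv.A7DR w)⟩
      · exact ⟨.seq (.und (.act b)) w, Basic.pre _ ha hw,
          base.trans (Deriv.seqCongr (Deriv.D1DR (.act b) H
            (fun b' e => by cases e; exact hb)) dw)⟩
    | tau =>
      exact ⟨.seq (.und .tau) w, Basic.pre _ ha hw,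
        base.trans (Deriv.seqCongr (Deriv.D1DR .tau H (fun b' e => by cases e)) dw)⟩
    | delta => exact absurd rfl ha
  | delay hx ih =>
    obtain ⟨w, hw, dw⟩ := ih
    exact ⟨.delay w, .delay hw, (Deriv.DRD H _).trans (Deriv.delayCongr dw)⟩
  | alt h1 h2 ih1 ih2 =>
    obtain ⟨w1, hw1, dw1⟩ := ih1
    obtain ⟨w2, hw2, dw2⟩ := ih2
    exact ⟨.alt w1 w2, .alt hw1 hw2, (Deriv.D3 H _ _).trans (Deriv.altCongr dw1 dw2)⟩

lemma abstrBasic (I : Set A) : ∀ {s : Tm A}, Basic s →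
    ∃ u, Basic u ∧ Deriv γ NoAx false (.abstr I s) u := by
  intro s hs
  induction hs with
  | und a =>
    cases a with
    | act b =>
      by_cases hb : b ∈ I
      · exact ⟨.und .tau, .und _, Deriv.TI2DR b I hb⟩
      · exact ⟨_, Basic.und _, Deriv.TI1DR (.act b) I
          (fun b' e => by cases e; exact hb)⟩
    | tau => exact ⟨_, Basic.und _, Deriv.TI1DR .tau I (fun b' e => by cases e)⟩
    | delta => exact ⟨_, Basic.und _, Deriv.TI1DR .delta I (fun b' e => by cases e)⟩
  | @pre a ha x hx ih =>
    obtain ⟨w, hw, dw⟩ := ih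
    have base : Deriv γ NoAx false (.abstr I (.seq (.und a) x)) (.seq (.abstr I (.und a)) (.abstr I x)) := Deriv.TI4 I (.und a) x
    cases a with
    | act b =>
      by_cases hb : b ∈ I
      · exact ⟨.seq (.und .tau) w, Basic.pre _ (fun e => by cases e) hw,
          base.trans (Deriv.seqCongr (Deriv.TI2DR b I hb) dw)⟩
      · exact ⟨.seq (.und (.act b)) w, Basic.pre _ ha hw,
          base.trans (Deriv.seqCongr (Deriv.TI1DR (.act b) I
            (fun b' e => by cases e; exact hb)) dw)⟩
    | tau =>
      exact ⟨.seq (.und .tau) w, Basic.pre _ ha hw,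
        base.trans (Deriv.seqCongr (Deriv.TI1DR .tau I (fun b' e => by cases e)) dw)⟩
    | delta => exact absurd rfl ha
  | delay hx ih =>
    obtain ⟨w, hw, dw⟩ := ih
    exact ⟨.delay w, .delay hw, (Deriv.DRTI I _).trans (Deriv.delayCongr dw)⟩
  | alt h1 h2 ih1 ih2 =>
    obtain ⟨w1, hw1, dw1⟩ := ih1
    obtain ⟨w2, hw2, dw2⟩ := ih2
    exact ⟨.alt w1 w2, .alt hw1 hw2, (Deriv.TI3 I _ _).trans (Deriv.altCongr dw1 dw2)⟩

/-- Elimination: every closed ACP_drt^τ term is derivably equal to a basic term. -/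
lemma elimBasic (hγcomm : ∀ a b, γ a b = γ b a) :
    ∀ t : Tm A, Tm.Plain t → ∃ u, Basic u ∧ Deriv γ NoAx false t u := by
  intro t ht
  induction t with
  | und a => exact ⟨.und a, .und a, .refl _⟩
  | alt t1 t2 ih1 ih2 =>
    obtain ⟨h1, h2⟩ := ht
    obtain ⟨u1, hu1, d1⟩ := ih1 h1
    obtain ⟨u2, hu2, d2⟩ := ih2 h2
    exact ⟨.alt u1 u2, .alt hu1 hu2, Deriv.altCongr d1 d2⟩
  | seq t1 t2 ih1 ih2 =>
    obtain ⟨h1, h2⟩ := ht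
    obtain ⟨u1, hu1, d1⟩ := ih1 h1
    obtain ⟨u2, hu2, d2⟩ := ih2 h2
    obtain ⟨w, hw, dw⟩ := seqBasic γ hu1 hu2
    exact ⟨w, hw, (Deriv.seqCongr d1 d2).trans dw⟩
  | delay t1 ih1 =>
    obtain ⟨u1, hu1, d1⟩ := ih1 ht
    exact ⟨.delay u1, .delay hu1, Deriv.delayCongr d1⟩
  | par t1 t2 ih1 ih2 =>
    obtain ⟨h1, h2⟩ := ht
    obtain ⟨u1, hu1, d1⟩ := ih1 h1
    obtain ⟨u2, hu2, d2⟩ := ih2 h2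
    obtain ⟨w, hw, dw⟩ := (main γ hγcomm (sz u1 + sz u2) u1 u2 le_rfl hu1 hu2).2.2.2.1
    exact ⟨w, hw, (Deriv.parCongr d1 d2).trans dw⟩
  | lm t1 t2 ih1 ih2 =>
    obtain ⟨h1, h2⟩ := ht
    obtain ⟨u1, hu1, d1⟩ := ih1 h1
    obtain ⟨u2, hu2, d2⟩ := ih2 h2
    obtain ⟨w, hw, dw⟩ := (main γ hγcomm (sz u1 + sz u2) u1 u2 le_rfl hu1 hu2).1
    exact ⟨w, hw, (Deriv.lmCongr d1 d2).trans dw⟩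
  | cm t1 t2 ih1 ih2 =>
    obtain ⟨h1, h2⟩ := ht
    obtain ⟨u1, hu1, d1⟩ := ih1 h1
    obtain ⟨u2, hu2, d2⟩ := ih2 h2
    obtain ⟨w, hw, dw⟩ := (main γ hγcomm (sz u1 + sz u2) u1 u2 le_rfl hu1 hu2).2.1
    exact ⟨w, hw, (Deriv.cmCongr d1 d2).trans dw⟩
  | encap H t1 ih1 =>
    obtain ⟨u1, hu1, d1⟩ := ih1 ht
    obtain ⟨w, hw, dw⟩ := encapBasic γ H hu1
    exact ⟨w, hw, (Deriv.encapCongr H d1).trans dw⟩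
  | abstr I t1 ih1 =>
    obtain ⟨u1, hu1, d1⟩ := ih1 ht
    obtain ⟨w, hw, dw⟩ := abstrBasic γ I hu1
    exact ⟨w, hw, (Deriv.abstrCongr I d1).trans dw⟩
  | timeout t1 ih1 =>
    obtain ⟨u1, hu1, d1⟩ := ih1 ht
    obtain ⟨w, hw, dw⟩ := timeoutBasic γ hu1
    exact ⟨w, hw, (Deriv.timeoutCongr d1).trans dw⟩
  | var X => exact ht.elim
  | recc E X => exact ht.elim
  | shift t1 _ => exact ht.elim
  | tfp t1 _ => exact ht.elim

end ParCommAux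
/-- Commutativity of parallel composition modulo ACP_drt^τ: for all closed
ACP_drt^τ terms t and t', the equation t ∥ t' = t' ∥ t is derivable from the
axioms of ACP_drt^τ. -/
theorem par_comm_derivable {A : Type} [Fintype A] (γ : ATD A → ATD A → ATD A)
    (hγcomm : ∀ a b, γ a b = γ b a)
    (hγassoc : ∀ a b c, γ (γ a b) c = γ a (γ b c))
    (hγtau : ∀ a, γ ATD.tau a = ATD.delta)
    (hγdelta : ∀ a, γ ATD.delta a = ATD.delta)
    (t t' : Tm A) (ht : Tm.Plain t) (ht' : Tm.Plain t') :
    Deriv γ NoAx false (.par t t') (.par t' t) := by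
  obtain ⟨u, hu, du⟩ := ParCommAux.elimBasic γ hγcomm t ht
  obtain ⟨u', hu', du'⟩ := ParCommAux.elimBasic γ hγcomm t' ht'
  have hc := (ParCommAux.main γ hγcomm (ParCommAux.sz u + ParCommAux.sz u')
    u u' le_rfl hu hu').2.2.2.2
  exact ((Deriv.parCongr du du').trans hc).trans (Deriv.parCongr du' du).symm
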